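/- arXiv:1606.01693 — 5 statements merged into one kernel-verified Lean document; each statement's English description precedes it below -/
import Mathlib

section
/- In a 3-connected planar graph with more than 6 vertices in which every 3-cut is trivial (i.e., isolates a single vertex of degree 3), no two vertices of degree 3 share an edge that lies on a triangle. -/
open SimpleGraph Set

/-- A plane embedding of a simple graph: vertices are mapped to points of the plane,
edges to injective arcs, such that arcs meet only in common endpoints. -/
structure PlaneEmbedding {V : Type*} (G : SimpleGraph V) where
  vertexMap : V → ℝ × ℝ
  vertex_inj : Function.Injective vertexMap
  edgeMap : ∀ ⦃a b : V⦄, G.Adj a b → C(unitInterval, ℝ × ℝ)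
  edge_start : ∀ ⦃a b : V⦄ (h : G.Adj a b), edgeMap h 0 = vertexMap a
  edge_end : ∀ ⦃a b : V⦄ (h : G.Adj a b), edgeMap h 1 = vertexMap b
  edge_inj : ∀ ⦃a b : V⦄ (h : G.Adj a b), Function.Injective (edgeMap h)
  edge_symm : ∀ ⦃a b : V⦄ (h : G.Adj a b),
    Set.range (edgeMap h) = Set.range (edgeMap h.symm)
  edge_int : ∀ ⦃a b c d : V⦄ (h : G.Adj a b) (h' : G.Adj c d),
    s(a, b) ≠ s(c, d) →
    Set.range (edgeMap h) ∩ Set.range (edgeMap h') ⊆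
      vertexMap '' (({a, b} : Set V) ∩ {c, d})
  edge_no_vertex : ∀ ⦃a b : V⦄ (h : G.Adj a b) (x : V),
    vertexMap x ∈ Set.range (edgeMap h) → x = a ∨ x = b

variable {V : Type*}

/-- The subset of the plane covered by the drawing of the graph. -/
def PlaneEmbedding.drawing {G : SimpleGraph V} (E : PlaneEmbedding G) : Set (ℝ × ℝ) :=
  Set.range E.vertexMap ∪ ⋃ (a : V) (b : V) (h : G.Adj a b), Set.range (E.edgeMap h)

/-- A face of a plane embedding: a connected component of the complement of the drawing. -/
def PlaneEmbedding.IsFace {G : SimpleGraph V} (E : PlaneEmbedding G)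
    (F : Set (ℝ × ℝ)) : Prop :=
  ∃ x ∈ E.drawingᶜ, F = connectedComponentIn E.drawingᶜ x

/-- A face whose boundary is the union of the arcs of three mutually adjacent vertices. -/
def PlaneEmbedding.FaceIsTriangleOn {G : SimpleGraph V} (E : PlaneEmbedding G)
    (F : Set (ℝ × ℝ)) (a b c : V) : Prop :=
  ∃ (h1 : G.Adj a b) (h2 : G.Adj b c) (h3 : G.Adj c a),
    frontier F = Set.range (E.edgeMap h1) ∪ Set.range (E.edgeMap h2) ∪
      Set.range (E.edgeMap h3)

/-- A face of a plane embedding is a triangle if it is bounded by three arcs of a 3-cycle. -/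
def PlaneEmbedding.FaceIsTriangle {G : SimpleGraph V} (E : PlaneEmbedding G)
    (F : Set (ℝ × ℝ)) : Prop :=
  ∃ a b c : V, E.FaceIsTriangleOn F a b c

/-- `(a,b,c)` is a facial triangle of the embedding `E`. -/
def PlaneEmbedding.IsFacialTriangle {G : SimpleGraph V} (E : PlaneEmbedding G)
    (a b c : V) : Prop :=
  ∃ F : Set (ℝ × ℝ), E.IsFace F ∧ E.FaceIsTriangleOn F a b c

/-- A graph is planar if it admits a plane embedding. -/
def IsPlanar (G : SimpleGraph V) : Prop := Nonempty (PlaneEmbedding G)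

/-- A graph is `k`-connected if it has more than `k` vertices and removing fewer than
`k` vertices always leaves a connected graph. -/
def IsKConnected (k : ℕ) (G : SimpleGraph V) : Prop :=
  k < Nat.card V ∧ ∀ S : Set V, S.Finite → S.ncard < k → (G.induce Sᶜ).Connected

/-- A 3-cut: a set of 3 vertices whose removal disconnects the graph. -/
def IsThreeCut (G : SimpleGraph V) (S : Set V) : Prop :=
  S.ncard = 3 ∧ ¬ (G.induce Sᶜ).Preconnected

/-- `C` is (the vertex set of) a connected component of `G - S`. -/
def IsCompOf (G : SimpleGraph V) (S : Set V) (C : Set V) : Prop :=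
  C.Nonempty ∧ C ⊆ Sᶜ ∧ (G.induce C).Connected ∧
    ∀ a ∈ C, ∀ b ∈ Sᶜ, G.Adj a b → b ∈ C

/-- The edge closed component of `G - {u,v,w}` corresponding to the component `C`:
the graph induced on `C ∪ {u,v,w}` with the edges `uv`, `vw`, `wu` added. -/
def edgeClosedGraph (G : SimpleGraph V) (u v w : V) (C : Set V) :
    SimpleGraph ↥(C ∪ {u, v, w}) :=
  SimpleGraph.fromRel (fun a b =>
    G.Adj a b ∨ ((a : V) ∈ ({u, v, w} : Set V) ∧ (b : V) ∈ ({u, v, w} : Set V)))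
/-- A trivial 3-cut: its removal leaves a single degree-3 vertex `x` whose neighbourhood
is the cut, and the remaining vertices form one connected component. -/
def IsTrivialThreeCut (G : SimpleGraph V) (S : Set V) : Prop :=
  IsThreeCut G S ∧ ∃ x : V, x ∉ S ∧ G.neighborSet x = S ∧
    (G.induce (Sᶜ \ {x})).Connected

section Aux

variable {V : Type*}

lemma aux_exists_not_mem {s : Set V} (h : s.ncard < Nat.card V) : ∃ z, z ∉ s := by
  by_contra h'
  push_neg at h'
  have : s = Set.univ := Set.eq_univ_of_forall h'
  rw [this, Set.ncard_univ] at h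
  exact lt_irrefl _ h

lemma aux_insert_le {s : Set V} {v : V} {n : ℕ} (h : s.ncard ≤ n) :
    (insert v s).ncard ≤ n + 1 :=
  (Set.ncard_insert_le _ _).trans (Nat.add_le_add_right h 1)

lemma aux_not_preconnected {G : SimpleGraph V} {T A : Set V} {a z : V}
    (ha : a ∈ T) (haA : a ∈ A) (hz : z ∈ T) (hzA : z ∉ A)
    (hcl : ∀ u ∈ A, ∀ v ∈ T, G.Adj u v → v ∈ A) :
    ¬ (G.induce T).Preconnected := by
  intro h
  obtain ⟨w⟩ := h ⟨a, ha⟩ ⟨z, hz⟩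
  have key : ∀ (x y : T) (_ : (G.induce T).Walk x y), (x : V) ∈ A → (y : V) ∈ A := by
    intro x y w
    induction w with
    | nil => exact id
    | cons hadj _ ih =>
        intro hx
        exact ih (hcl _ hx _ (Subtype.coe_prop _) hadj)
  exact hzA (key _ _ w haA)

lemma aux_third_neighbor [Fintype V] {G : SimpleGraph V} {a b c : V}
    (h : (G.neighborSet a).ncard = 3) (hb : G.Adj a b) (hc : G.Adj a c) (hbc : b ≠ c) :
    ∃ x, G.neighborSet a \ {b, c} = {x} := by
  have hfin : (G.neighborSet a).Finite := Set.toFinite _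
  have hsub : ({b, c} : Set V) ⊆ G.neighborSet a := by
    rintro v (rfl | rfl)
    · exact hb
    · exact hc
  have h2 : ({b, c} : Set V).ncard = 2 := Set.ncard_pair hbc
  have hd : (G.neighborSet a \ {b, c}).ncard = 1 := by
    rw [Set.ncard_diff hsub, h, h2]
  exact Set.ncard_eq_one.mp hd

end Aux

/-- In an essentially 4-connected polyhedron with more than 6 vertices, no two degree-3
vertices share an edge lying on a triangle. -/
theorem stmt0 [Fintype V] (G : SimpleGraph V)
    (hP : IsPlanar G) (h3 : IsKConnected 3 G) (hcard : 6 < Nat.card V)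
    (htriv : ∀ S : Set V, IsThreeCut G S → IsTrivialThreeCut G S) :
    ¬ ∃ a b c : V, G.Adj a b ∧ G.Adj b c ∧ G.Adj c a ∧
      (G.neighborSet a).ncard = 3 ∧ (G.neighborSet b).ncard = 3 := by

  rintro ⟨a, b, c, hab, hbc, hca, hda, hdb⟩
  have hba : G.Adj b a := hab.symm
  have hac : G.Adj a c := hca.symm
  have hcb : G.Adj c b := hbc.symm
  -- third neighbor of a
  obtain ⟨x, hx⟩ := aux_third_neighbor hda hab hac hbc.ne
  obtain ⟨y, hy⟩ := aux_third_neighbor hdb hba hbc hca.ne.symm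
  have hxmem : x ∈ G.neighborSet a \ ({b, c} : Set V) := by rw [hx]; rfl
  have hymem : y ∈ G.neighborSet b \ ({a, c} : Set V) := by rw [hy]; rfl
  have hax : G.Adj a x := hxmem.1
  have hby : G.Adj b y := hymem.1
  have hxb : x ≠ b := fun h => hxmem.2 (by simp [h])
  have hxc : x ≠ c := fun h => hxmem.2 (by simp [h])
  have hya : y ≠ a := fun h => hymem.2 (by simp [h])
  have hyc : y ≠ c := fun h => hymem.2 (by simp [h])
  have hxa : x ≠ a := fun h => G.loopless.irrefl a (h ▸ hax)
  have hyb : y ≠ b := fun h => G.loopless.irrefl b (h ▸ hby)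
  -- neighbors of a are exactly b, c, x
  have hNa : ∀ v, G.Adj a v → v = b ∨ v = c ∨ v = x := by
    intro v hv
    by_cases hvb : v = b
    · exact Or.inl hvb
    by_cases hvc : v = c
    · exact Or.inr (Or.inl hvc)
    have : v ∈ G.neighborSet a \ ({b, c} : Set V) := ⟨hv, by simp [hvb, hvc]⟩
    rw [hx] at this
    exact Or.inr (Or.inr this)
  have hNb : ∀ v, G.Adj b v → v = a ∨ v = c ∨ v = y := by
    intro v hv
    by_cases hva : v = a
    · exact Or.inl hva
    by_cases hvc : v = c
    · exact Or.inr (Or.inl hvc)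
    have : v ∈ G.neighborSet b \ ({a, c} : Set V) := ⟨hv, by simp [hva, hvc]⟩
    rw [hy] at this
    exact Or.inr (Or.inr this)
  by_cases hxy : x = y
  · -- x = y : {c, x} is a 2-cut, contradicting 3-connectivity
    subst hxy
    set S : Set V := {c, x} with hS
    have hSn : S.ncard ≤ 2 :=
      aux_insert_le (Set.ncard_singleton _).le
    have hconn := (h3.2 S (Set.toFinite S) (lt_of_le_of_lt hSn (by norm_num))).preconnected
    -- pick z outside {c, x, a, b}
    obtain ⟨z, hz⟩ : ∃ z, z ∉ ({c, x, a, b} : Set V) := by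
      apply aux_exists_not_mem
      have h4 : ({c, x, a, b} : Set V).ncard ≤ 4 :=
        aux_insert_le (aux_insert_le (aux_insert_le (Set.ncard_singleton _).le))
      omega
    simp only [Set.mem_insert_iff, Set.mem_singleton_iff, not_or] at hz
    obtain ⟨hzc, hzx, hza, hzb⟩ := hz
    refine aux_not_preconnected (T := Sᶜ) (A := {a, b}) (a := a) (z := z)
      ?_ (by simp) ?_ (by simp [hza, hzb]) ?_ hconn
    · rintro (h | h)
      · exact hca.ne h.symm
      · exact hxa h.symm
    · rintro (h | h)
      · exact hzc h
      · exact hzx h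
    · rintro u (rfl | rfl) v hv huv
      · rcases hNa v huv with rfl | rfl | rfl
        · simp
        · exact absurd (by simp [hS]) hv
        · exact absurd (by simp [hS]) hv
      · rcases hNb v huv with rfl | rfl | rfl
        · simp
        · exact absurd (by simp [hS]) hv
        · exact absurd (by simp [hS]) hv
  · -- x ≠ y : {c, x, y} is a 3-cut, and it cannot be trivial
    set S : Set V := {c, x, y} with hS
    have haS : a ∉ S := by simp [hS, hca.ne', hxa.symm, hya.symm]
    have hbS : b ∉ S := by simp [hS, hbc.ne, hxb.symm, hyb.symm]
    have hSn : S.ncard = 3 := by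
      rw [hS, Set.ncard_insert_of_notMem (by rintro (rfl | rfl) <;> [exact hxc rfl; exact hyc rfl] : c ∉ ({x, y} : Set V))
        (Set.toFinite _), Set.ncard_pair hxy]
    -- closure property for {a, b}
    have hcl : ∀ T : Set V, T ⊆ Sᶜ → ∀ u ∈ ({a, b} : Set V), ∀ v ∈ T, G.Adj u v →
        v ∈ ({a, b} : Set V) := by
      rintro T hT u (rfl | rfl) v hv huv
      · rcases hNa v huv with rfl | rfl | rfl
        · simp
        · exact absurd (by simp [hS]) (hT hv)
        · exact absurd (by simp [hS]) (hT hv)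
      · rcases hNb v huv with rfl | rfl | rfl
        · simp
        · exact absurd (by simp [hS]) (hT hv)
        · exact absurd (by simp [hS]) (hT hv)
    have hcut : IsThreeCut G S := by
      refine ⟨hSn, ?_⟩
      obtain ⟨z, hz⟩ : ∃ z, z ∉ ({c, x, y, a, b} : Set V) := by
        apply aux_exists_not_mem
        have h5 : ({c, x, y, a, b} : Set V).ncard ≤ 5 :=
          aux_insert_le (aux_insert_le (aux_insert_le (aux_insert_le
            (Set.ncard_singleton _).le)))
        omega
      simp only [Set.mem_insert_iff, Set.mem_singleton_iff, not_or] at hz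
      obtain ⟨hzc, hzx, hzy, hza, hzb⟩ := hz
      refine aux_not_preconnected (T := Sᶜ) (A := {a, b}) (a := a) (z := z)
        haS (by simp) (by rintro (rfl | rfl | rfl) <;> [exact hzc rfl; exact hzx rfl; exact hzy rfl])
        (by simp [hza, hzb]) (hcl Sᶜ subset_rfl)
    obtain ⟨_, x0, hx0S, hNx0, hconn⟩ := htriv S hcut
    have hx0a : x0 ≠ a := by
      intro h
      subst h
      have : b ∈ S := hNx0 ▸ hab
      exact hbS this
    have hx0b : x0 ≠ b := by
      intro h
      subst h
      have : a ∈ S := hNx0 ▸ hba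
      exact haS this
    obtain ⟨z, hz⟩ : ∃ z, z ∉ ({c, x, y, x0, a, b} : Set V) := by
      apply aux_exists_not_mem
      have h6 : ({c, x, y, x0, a, b} : Set V).ncard ≤ 6 :=
        aux_insert_le (aux_insert_le (aux_insert_le (aux_insert_le (aux_insert_le
          (Set.ncard_singleton _).le))))
      omega
    simp only [Set.mem_insert_iff, Set.mem_singleton_iff, not_or] at hz
    obtain ⟨hzc, hzx, hzy, hzx0, hza, hzb⟩ := hz
    refine aux_not_preconnected (T := Sᶜ \ {x0}) (A := {a, b}) (a := a) (z := z)
      ⟨haS, Ne.symm hx0a⟩ (by simp)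
      ⟨by rintro (rfl | rfl | rfl) <;> [exact hzc rfl; exact hzx rfl; exact hzy rfl], hzx0⟩
      (by simp [hza, hzb]) ?_ hconn.preconnected
    exact hcl (Sᶜ \ {x0}) Set.diff_subset
end

section
/- Let G be a 3-connected planar graph, {u,v,w} a 3-cut in G, and G' an edge closed component of G - {u,v,w}. For any two vertices a, b of G' that are not both in {u,v,w}, the maximum number of internally vertex-disjoint a-b paths in G' is at least the maximum number of internally vertex-disjoint a-b paths in G. -/
open SimpleGraph Set

variable {V : Type*}

/-- There exist `n` pairwise internally vertex-disjoint `a`-`b` paths in `G`. -/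
def HasDisjointPaths (G : SimpleGraph V) (a b : V) (n : ℕ) : Prop :=
  ∃ P : Fin n → G.Path a b, ∀ i j, i ≠ j → ∀ x : V,
    x ∈ (P i : G.Walk a b).support → x ∈ (P j : G.Walk a b).support → x = a ∨ x = b

private lemma key_walk {V : Type*} (G : SimpleGraph V) (u v w : V) (C : Set V)
    (hcl : ∀ a ∈ C, ∀ b ∈ ({u, v, w} : Set V)ᶜ, G.Adj a b → b ∈ C)
    (b : V) (hb : b ∈ C ∪ {u, v, w}) :
    ∀ {y : V} (p : G.Walk y b), p.support.Nodup →
    ∀ (x : V) (hx : x ∈ C ∪ {u, v, w}),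
    (y = x ∨ (y ∉ C ∪ ({u, v, w} : Set V) ∧ x ∈ ({u, v, w} : Set V) ∧ x ∉ p.support)) →
    ∃ q : (edgeClosedGraph G u v w C).Walk ⟨x, hx⟩ ⟨b, hb⟩,
      ∀ z ∈ q.support, (z : V) = x ∨ (z : V) ∈ p.support := by
  intro y p
  induction p with
  | nil =>
    intro _ x hx hstart
    rcases hstart with rfl | ⟨hbU, _, _⟩
    · exact ⟨SimpleGraph.Walk.nil, by simp⟩
    · exact absurd hb hbU
  | @cons y y' b h p ih =>
    intro hnd x hx hstart
    have hnd' : p.support.Nodup := by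
      simpa using (List.nodup_cons.mp (by simpa using hnd)).2
    have adjE : ∀ (s t : ↥(C ∪ ({u, v, w} : Set V))), (s : V) ≠ (t : V) →
        (G.Adj s t ∨ ((s : V) ∈ ({u, v, w} : Set V) ∧ (t : V) ∈ ({u, v, w} : Set V))) →
        (edgeClosedGraph G u v w C).Adj s t := by
      intro s t hne hr
      exact ⟨fun hst => hne (congrArg Subtype.val hst), Or.inl hr⟩
    rcases hstart with rfl | ⟨hyU, hxS, hxp⟩
    · -- current vertex is x itself (now substituted to y)
      by_cases hy' : y' ∈ C ∪ ({u, v, w} : Set V)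
      · obtain ⟨q, hq⟩ := ih hb hnd' y' hy' (Or.inl rfl)
        refine ⟨SimpleGraph.Walk.cons (adjE ⟨y, hx⟩ ⟨y', hy'⟩ h.ne (Or.inl h)) q, ?_⟩
        intro z hz
        rcases (SimpleGraph.Walk.mem_support_iff _).mp hz with hz | hz
        · left; exact congrArg Subtype.val hz
        · rcases hq z hz with h1 | h1
          · right; rw [h1]; simp [SimpleGraph.Walk.support_cons]
          · right; simp [SimpleGraph.Walk.support_cons, h1]
      · -- next vertex leaves U, so y must be in the cut
        have hyS : y ∈ ({u, v, w} : Set V) := by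
          rcases hx with hxC | hxS
          · exfalso
            have hy'S : y' ∈ ({u, v, w} : Set V)ᶜ := fun hh => hy' (Or.inr hh)
            exact hy' (Or.inl (hcl y hxC y' hy'S h))
          · exact hxS
        have hyp : y ∉ p.support := by
          have := (List.nodup_cons.mp (by simpa using hnd)).1
          simpa using this
        obtain ⟨q, hq⟩ := ih hb hnd' y hx (Or.inr ⟨hy', hyS, hyp⟩)
        refine ⟨q, ?_⟩
        intro z hz
        rcases hq z hz with h1 | h1
        · exact Or.inl h1
        · right; simp [SimpleGraph.Walk.support_cons, h1]
    · -- we are skipping outside U, looking for the next U-vertex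
      by_cases hy' : y' ∈ C ∪ ({u, v, w} : Set V)
      · have hy'S : y' ∈ ({u, v, w} : Set V) := by
          rcases hy' with hy'C | hy'S
          · exfalso
            have hyS : y ∈ ({u, v, w} : Set V)ᶜ := fun hh => hyU (Or.inr hh)
            exact hyU (Or.inl (hcl y' hy'C y hyS h.symm))
          · exact hy'S
        have hxy' : x ≠ y' := by
          intro hh
          exact hxp (by rw [hh]; simp [SimpleGraph.Walk.support_cons,
            SimpleGraph.Walk.start_mem_support])
        obtain ⟨q, hq⟩ := ih hb hnd' y' hy' (Or.inl rfl)
        refine ⟨SimpleGraph.Walk.cons (adjE ⟨x, hx⟩ ⟨y', hy'⟩ hxy' (Or.inr ⟨hxS, hy'S⟩)) q, ?_⟩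
        intro z hz
        rcases (SimpleGraph.Walk.mem_support_iff _).mp hz with hz | hz
        · left; exact congrArg Subtype.val hz
        · rcases hq z hz with h1 | h1
          · right; rw [h1]; simp [SimpleGraph.Walk.support_cons]
          · right; simp [SimpleGraph.Walk.support_cons, h1]
      · have hxp' : x ∉ p.support := fun hh =>
          hxp (by simp [SimpleGraph.Walk.support_cons, hh])
        obtain ⟨q, hq⟩ := ih hb hnd' x hx (Or.inr ⟨hy', hxS, hxp'⟩)
        refine ⟨q, ?_⟩
        intro z hz
        rcases hq z hz with h1 | h1
        · exact Or.inl h1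
        · right; simp [SimpleGraph.Walk.support_cons, h1]

/-- For vertices of an edge closed component not both in the cut, the maximum number of
internally disjoint paths between them in the component is at least that in `G`. -/
theorem stmt5 [Fintype V] (G : SimpleGraph V)
    (hP : IsPlanar G) (h3 : IsKConnected 3 G)
    (u v w : V) (hcut : IsThreeCut G {u, v, w})
    (C : Set V) (hC : IsCompOf G {u, v, w} C)
    (a b : ↥(C ∪ {u, v, w}))
    (hab : ¬ ((a : V) ∈ ({u, v, w} : Set V) ∧ (b : V) ∈ ({u, v, w} : Set V)))
    (n : ℕ) (hn : HasDisjointPaths G (a : V) (b : V) n) :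
    HasDisjointPaths (edgeClosedGraph G u v w C) a b n := by
  classical
  obtain ⟨P, hPd⟩ := hn
  have hcl := hC.2.2.2
  have hkey : ∀ i : Fin n, ∃ q : (edgeClosedGraph G u v w C).Walk a b,
      ∀ z ∈ q.support, (z : V) = (a : V) ∨ (z : V) ∈ (P i : G.Walk (a : V) (b : V)).support := by
    intro i
    have := key_walk G u v w C hcl (b : V) b.property
      (P i : G.Walk (a : V) (b : V)) (P i).2.support_nodup (a : V) a.property (Or.inl rfl)
    obtain ⟨q, hq⟩ := this
    exact ⟨q, hq⟩
  choose q hq using hkey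
  refine ⟨fun i => (q i).toPath, ?_⟩
  intro i j hij x hxi hxj
  have hxi' := hq i x ((q i).support_toPath_subset hxi)
  have hxj' := hq j x ((q j).support_toPath_subset hxj)
  rcases hxi' with h1 | h1
  · exact Or.inl (Subtype.ext h1)
  rcases hxj' with h2 | h2
  · exact Or.inl (Subtype.ext h2)
  rcases hPd i j hij (x : V) h1 h2 with h3 | h3
  · exact Or.inl (Subtype.ext h3)
  · exact Or.inr (Subtype.ext h3)
end

section
/- Let G be a 3-connected planar graph, {u,v,w} a 3-cut in G, and G' an edge closed component of G - {u,v,w}. Then every 3-cut of G' is also a 3-cut of G. -/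
open SimpleGraph Set

variable {V : Type*}

lemma aux_walk {V : Type*} (G : SimpleGraph V) (u v w : V) (C : Set V)
    (hC : IsCompOf G {u, v, w} C)
    (S : Set ↥(C ∪ {u, v, w}))
    {x y : ↥((Subtype.val '' S)ᶜ : Set V)}
    (p : (G.induce ((Subtype.val '' S)ᶜ : Set V)).Walk x y) :
    ∀ (hy : (y : V) ∈ C ∪ {u, v, w}) (hyS : (⟨(y : V), hy⟩ : ↥(C ∪ {u, v, w})) ∈ (Sᶜ : Set ↥(C ∪ {u, v, w})))
      (a : ↥(C ∪ {u, v, w})) (haS : a ∈ (Sᶜ : Set ↥(C ∪ {u, v, w})))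
      (h1 : ∀ hx : (x : V) ∈ C ∪ {u, v, w}, (x : V) = a)
      (h2 : (x : V) ∉ C ∪ {u, v, w} → (a : V) ∈ ({u, v, w} : Set V)),
      ((edgeClosedGraph G u v w C).induce (Sᶜ : Set ↥(C ∪ {u, v, w}))).Reachable
        ⟨a, haS⟩ ⟨⟨(y : V), hy⟩, hyS⟩ := by
  have hmem : ∀ (t : ↥(C ∪ {u, v, w})), (t : V) ∉ (Subtype.val '' S : Set V) → t ∉ S := by
    intro t ht hts
    exact ht ⟨t, hts, rfl⟩
  induction p with
  | nil =>
    intro hy hyS a haS h1 h2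
    have : (⟨a, haS⟩ : ↥(Sᶜ : Set ↥(C ∪ {u, v, w}))) = ⟨⟨_, hy⟩, hyS⟩ :=
      Subtype.ext (Subtype.ext (h1 hy).symm)
    rw [this]
  | @cons x z y hadj p ih =>
    intro hy hyS a haS h1 h2
    have hGxz : G.Adj (x : V) (z : V) := hadj
    by_cases hxT : (x : V) ∈ C ∪ {u, v, w}
    · have hxa : (x : V) = (a : V) := h1 hxT
      by_cases hzT : (z : V) ∈ C ∪ {u, v, w}
      · have hzS : (⟨(z : V), hzT⟩ : ↥(C ∪ {u, v, w})) ∈ (Sᶜ : Set ↥(C ∪ {u, v, w})) :=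
          hmem _ z.2
        have hne : a ≠ (⟨(z : V), hzT⟩ : ↥(C ∪ {u, v, w})) := by
          intro h; exact hGxz.ne (hxa.trans (congrArg Subtype.val h))
        have step : (edgeClosedGraph G u v w C).Adj a ⟨(z : V), hzT⟩ :=
          ⟨hne, Or.inl (Or.inl (hxa ▸ hGxz))⟩
        have step' : ((edgeClosedGraph G u v w C).induce (Sᶜ : Set ↥(C ∪ {u, v, w}))).Adj
            ⟨a, haS⟩ ⟨⟨(z : V), hzT⟩, hzS⟩ := step
        exact step'.reachable.trans
          (ih hy hyS ⟨(z : V), hzT⟩ hzS (fun _ => rfl) (fun h => absurd hzT h))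
      · have hxuvw : (x : V) ∈ ({u, v, w} : Set V) := by
          rcases hxT with hxC | hxuvw
          · exfalso
            apply hzT
            left
            refine hC.2.2.2 _ hxC _ ?_ hGxz
            intro hzuvw
            exact hzT (Or.inr hzuvw)
          · exact hxuvw
        exact ih hy hyS a haS (fun h => absurd h hzT) (fun _ => hxa ▸ hxuvw)
    · have hauvw : (a : V) ∈ ({u, v, w} : Set V) := h2 hxT
      by_cases hzT : (z : V) ∈ C ∪ {u, v, w}
      · have hzuvw : (z : V) ∈ ({u, v, w} : Set V) := by
          rcases hzT with hzC | hzuvw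
          · exfalso
            apply hxT
            left
            refine hC.2.2.2 _ hzC _ ?_ hGxz.symm
            intro hxuvw
            exact hxT (Or.inr hxuvw)
          · exact hzuvw
        have hzS : (⟨(z : V), hzT⟩ : ↥(C ∪ {u, v, w})) ∈ (Sᶜ : Set ↥(C ∪ {u, v, w})) :=
          hmem _ z.2
        by_cases heq : (a : V) = (z : V)
        · exact ih hy hyS a haS (fun _ => heq.symm) (fun h => absurd hzT h)
        · have hne : a ≠ (⟨(z : V), hzT⟩ : ↥(C ∪ {u, v, w})) := by
            intro h; exact heq (congrArg Subtype.val h)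
          have step : (edgeClosedGraph G u v w C).Adj a ⟨(z : V), hzT⟩ :=
            ⟨hne, Or.inl (Or.inr ⟨hauvw, hzuvw⟩)⟩
          have step' : ((edgeClosedGraph G u v w C).induce (Sᶜ : Set ↥(C ∪ {u, v, w}))).Adj
              ⟨a, haS⟩ ⟨⟨(z : V), hzT⟩, hzS⟩ := step
          exact step'.reachable.trans
            (ih hy hyS ⟨(z : V), hzT⟩ hzS (fun _ => rfl) (fun h => absurd hzT h))
      · exact ih hy hyS a haS (fun h => absurd h hzT) (fun _ => hauvw)

/-- Every 3-cut of an edge closed component of a 3-cut of `G` is also a 3-cut of `G`. -/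
theorem stmt6 [Fintype V] (G : SimpleGraph V)
    (hP : IsPlanar G) (h3 : IsKConnected 3 G)
    (u v w : V) (hcut : IsThreeCut G {u, v, w})
    (C : Set V) (hC : IsCompOf G {u, v, w} C)
    (S : Set ↥(C ∪ {u, v, w}))
    (hS : IsThreeCut (edgeClosedGraph G u v w C) S) :
    IsThreeCut G (Subtype.val '' S) := by
  constructor
  · rw [Set.ncard_image_of_injective S Subtype.val_injective]
    exact hS.1
  · intro hpre
    apply hS.2
    intro p q
    have hpmem : (p : ↥(C ∪ {u, v, w})).val ∈ ((Subtype.val '' S)ᶜ : Set V) := by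
      intro h
      rcases h with ⟨s, hs, hval⟩
      exact p.2 (by rwa [Subtype.val_injective hval] at hs)
    have hqmem : (q : ↥(C ∪ {u, v, w})).val ∈ ((Subtype.val '' S)ᶜ : Set V) := by
      intro h
      rcases h with ⟨s, hs, hval⟩
      exact q.2 (by rwa [Subtype.val_injective hval] at hs)
    obtain ⟨wk⟩ := hpre ⟨(p : ↥(C ∪ {u, v, w})).val, hpmem⟩ ⟨(q : ↥(C ∪ {u, v, w})).val, hqmem⟩
    have := aux_walk G u v w C hC S wk (q : ↥(C ∪ {u, v, w})).2 (by simp) p.val p.2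
      (fun _ => rfl) (fun h => absurd (p : ↥(C ∪ {u, v, w})).2 h)
    convert this using 2 <;> exact Subtype.ext (Subtype.ext rfl)
end

section
/- Let G be a 3-connected planar graph with exactly k 3-cuts, k ≥ 1, and let {u,v,w} be a 3-cut in G. Then the total number of 3-cuts in the two edge closed components of G - {u,v,w} is at most k - 1. -/
open SimpleGraph Set

variable {V : Type*}

private lemma reach_closed {W : Type*} {H : SimpleGraph W} (p : W → Prop)
    (hstep : ∀ a b, p a → H.Adj a b → p b) {x y : W} (hr : H.Reachable x y)
    (hx : p x) : p y := by
  obtain ⟨wk⟩ := hr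
  induction wk with
  | nil => exact hx
  | cons h _ ih => exact ih (hstep _ _ hx h)

private lemma comp_disjoint {V : Type*} {G : SimpleGraph V} {T C C' : Set V}
    (hC : IsCompOf G T C) (hC' : IsCompOf G T C') (hne : C ≠ C') : Disjoint C C' := by
  rw [Set.disjoint_left]
  intro x hxC hxC'
  apply hne
  have key : ∀ {D D' : Set V}, IsCompOf G T D → IsCompOf G T D' → x ∈ D → x ∈ D' →
      D ⊆ D' := by
    intro D D' hD hD' hxD hxD' a haD
    have hr : (G.induce D).Reachable ⟨x, hxD⟩ ⟨a, haD⟩ := hD.2.2.1.preconnected _ _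
    exact reach_closed (fun z : ↥D => (z : V) ∈ D')
      (fun z z' hz hadj => hD'.2.2.2 z hz z' (hD.2.1 z'.2) hadj) hr hxD'
  exact Set.Subset.antisymm (key hC hC' hxC hxC') (key hC' hC hxC' hxC)

private lemma transfer {V : Type*} [Fintype V] {G : SimpleGraph V} {u v w : V}
    (hT3 : ({u, v, w} : Set V).ncard = 3)
    {C : Set V} (hC : IsCompOf G {u, v, w} C)
    {S : Set ↥(C ∪ {u, v, w})} (hS : IsThreeCut (edgeClosedGraph G u v w C) S) :
    IsThreeCut G (Subtype.val '' S) ∧ Subtype.val '' S ≠ ({u, v, w} : Set V) := by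
  classical
  have hS'3 : (Subtype.val '' S).ncard = 3 :=
    (Set.ncard_image_of_injective S Subtype.val_injective).trans hS.1
  by_cases hTS : ({u, v, w} : Set V) ⊆ Subtype.val '' S
  · -- then S is (the lift of) {u,v,w}, but removing it leaves the connected C : contradiction
    exfalso
    have hST : ({u, v, w} : Set V) = Subtype.val '' S :=
      Set.eq_of_subset_of_ncard_le hTS (by rw [hS'3, hT3]) (Set.toFinite _)
    apply hS.2
    have hmemC : ∀ z : ↥(C ∪ {u, v, w}), z ∈ Sᶜ → (z : V) ∈ C := by
      intro z hz
      rcases z.2 with h | h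
      · exact h
      · exfalso
        obtain ⟨s, hsS, hsv⟩ := hTS h
        exact hz ((Subtype.val_injective hsv) ▸ hsS)
    have hnotS : ∀ c : ↥C, (⟨(c : V), Or.inl c.2⟩ : ↥(C ∪ {u, v, w})) ∈ Sᶜ := by
      intro c hmem
      have : (c : V) ∈ Subtype.val '' S := ⟨_, hmem, rfl⟩
      rw [← hST] at this
      exact hC.2.1 c.2 this
    let f : G.induce C →g (edgeClosedGraph G u v w C).induce Sᶜ :=
      { toFun := fun c => ⟨⟨(c : V), Or.inl c.2⟩, hnotS c⟩
        map_rel' := by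
          intro a b hab
          have hab' : G.Adj (a : V) (b : V) := hab
          show (edgeClosedGraph G u v w C).Adj _ _
          rw [edgeClosedGraph, SimpleGraph.fromRel_adj]
          exact ⟨fun h => hab'.ne (congrArg (Subtype.val : ↥(C ∪ {u, v, w}) → V) h), Or.inl (Or.inl hab')⟩ }
    have hsurj : Function.Surjective f := by
      intro z
      refine ⟨⟨((z : ↥(C ∪ {u, v, w})) : V), hmemC z.1 z.2⟩, ?_⟩
      exact Subtype.ext (Subtype.ext rfl)
    exact ((hC.2.2.1).map f hsurj).preconnected
  · obtain ⟨t, htT, htS'⟩ := Set.not_subset.mp hTS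
    have htCT : t ∈ C ∪ {u, v, w} := Or.inr htT
    have htSc : (⟨t, htCT⟩ : ↥(C ∪ {u, v, w})) ∈ Sᶜ := fun hmem => htS' ⟨_, hmem, rfl⟩
    have hnotpre := hS.2
    unfold SimpleGraph.Preconnected at hnotpre
    push_neg at hnotpre
    obtain ⟨x, y, hxy⟩ := hnotpre
    set G₁ := edgeClosedGraph G u v w C with hG₁
    set tt : ↥(Sᶜ) := ⟨⟨t, htCT⟩, htSc⟩ with htt
    have hz : ∃ z : ↥(Sᶜ), ¬ (G₁.induce Sᶜ).Reachable z tt := by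
      by_contra h
      push_neg at h
      exact hxy ((h x).trans (h y).symm)
    obtain ⟨z, hzt⟩ := hz
    have hTstep : ∀ a : ↥(Sᶜ), ((a : ↥(C ∪ {u, v, w})) : V) ∈ ({u, v, w} : Set V) →
        (G₁.induce Sᶜ).Reachable z a → False := by
      intro a haT har
      apply hzt
      by_cases he : ((a : ↥(C ∪ {u, v, w})) : V) = t
      · have : a = tt := Subtype.ext (Subtype.ext he)
        rwa [this] at har
      · refine har.trans (SimpleGraph.Adj.reachable ?_)
        show G₁.Adj (a : ↥(C ∪ {u, v, w})) ⟨t, htCT⟩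
        rw [hG₁, edgeClosedGraph, SimpleGraph.fromRel_adj]
        exact ⟨fun h => he (congrArg (Subtype.val : ↥(C ∪ {u, v, w}) → V) h), Or.inl (Or.inr ⟨haT, htT⟩)⟩
    have hA : ∀ a : ↥(Sᶜ), (G₁.induce Sᶜ).Reachable z a →
        ((a : ↥(C ∪ {u, v, w})) : V) ∈ C := by
      intro a har
      rcases (a : ↥(C ∪ {u, v, w})).2 with h | h
      · exact h
      · exact absurd har (fun hr => hTstep a h hr)
    refine ⟨⟨hS'3, ?_⟩, fun h => htS' (h.symm ▸ htT)⟩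
    intro hpre
    have hzS' : ((z : ↥(C ∪ {u, v, w})) : V) ∈ (Subtype.val '' S)ᶜ := by
      rintro ⟨s, hsS, hsv⟩
      exact z.2 ((Subtype.val_injective hsv) ▸ hsS)
    have htS'c : t ∈ (Subtype.val '' S)ᶜ := htS'
    have hreach := hpre ⟨_, hzS'⟩ ⟨t, htS'c⟩
    set p : ↥((Subtype.val '' S)ᶜ) → Prop := fun a =>
      ∃ (ha : (a : V) ∈ C ∪ {u, v, w}) (haS : (⟨(a : V), ha⟩ : ↥(C ∪ {u, v, w})) ∈ Sᶜ),
        (G₁.induce Sᶜ).Reachable z ⟨⟨(a : V), ha⟩, haS⟩ with hp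
    have hstep : ∀ a b : ↥((Subtype.val '' S)ᶜ), p a → (G.induce (Subtype.val '' S)ᶜ).Adj a b → p b := by
      rintro a b ⟨ha, haS, har⟩ hadj
      have hadjG : G.Adj (a : V) (b : V) := hadj
      have haC : (a : V) ∈ C := hA ⟨⟨(a : V), ha⟩, haS⟩ har
      have hbCT : (b : V) ∈ C ∪ {u, v, w} := by
        by_cases hbT : (b : V) ∈ ({u, v, w} : Set V)
        · exact Or.inr hbT
        · exact Or.inl (hC.2.2.2 _ haC _ hbT hadjG)
      have hbS : (⟨(b : V), hbCT⟩ : ↥(C ∪ {u, v, w})) ∈ Sᶜ := fun hmem => b.2 ⟨_, hmem, rfl⟩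
      refine ⟨hbCT, hbS, har.trans (SimpleGraph.Adj.reachable ?_)⟩
      show G₁.Adj _ _
      rw [hG₁, edgeClosedGraph, SimpleGraph.fromRel_adj]
      exact ⟨fun h => hadjG.ne (congrArg (Subtype.val : ↥(C ∪ {u, v, w}) → V) h), Or.inl (Or.inl hadjG)⟩
    have hbase : p ⟨_, hzS'⟩ := ⟨(z : ↥(C ∪ {u, v, w})).2, z.2, SimpleGraph.Reachable.refl _⟩
    obtain ⟨ha, haS, har⟩ := reach_closed p hstep hreach hbase
    exact hzt ((show (⟨⟨t, ha⟩, haS⟩ : ↥(Sᶜ)) = tt from Subtype.ext (Subtype.ext rfl)) ▸ har)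

/-- If `G` has exactly `k ≥ 1` 3-cuts and `{u,v,w}` is a 3-cut, the two edge closed
components of `G - {u,v,w}` together have at most `k - 1` 3-cuts. -/
theorem stmt7 [Fintype V] (G : SimpleGraph V)
    (hP : IsPlanar G) (h3 : IsKConnected 3 G)
    (k : ℕ) (hk : 1 ≤ k) (hcuts : {S : Set V | IsThreeCut G S}.ncard = k)
    (u v w : V) (hcut : IsThreeCut G {u, v, w})
    (C₁ C₂ : Set V) (h1 : IsCompOf G {u, v, w} C₁) (h2 : IsCompOf G {u, v, w} C₂)
    (hne : C₁ ≠ C₂) (hcover : C₁ ∪ C₂ = ({u, v, w} : Set V)ᶜ) :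
    {S : Set ↥(C₁ ∪ {u, v, w}) | IsThreeCut (edgeClosedGraph G u v w C₁) S}.ncard +
      {S : Set ↥(C₂ ∪ {u, v, w}) | IsThreeCut (edgeClosedGraph G u v w C₂) S}.ncard ≤
      k - 1 := by
  classical
  have hT3 : ({u, v, w} : Set V).ncard = 3 := hcut.1
  have hdisjC := comp_disjoint h1 h2 hne
  set A := {S : Set ↥(C₁ ∪ {u, v, w}) | IsThreeCut (edgeClosedGraph G u v w C₁) S} with hA
  set B := {S : Set ↥(C₂ ∪ {u, v, w}) | IsThreeCut (edgeClosedGraph G u v w C₂) S} with hB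
  set D := {S : Set V | IsThreeCut G S} \ {({u, v, w} : Set V)} with hD
  have hDcard : D.ncard = k - 1 := by
    have hmem : ({u, v, w} : Set V) ∈ {S : Set V | IsThreeCut G S} := hcut
    rw [hD, Set.ncard_diff_singleton_of_mem hmem, hcuts]
  have hsub1 : ∀ (S : Set ↥(C₁ ∪ {u, v, w})), Subtype.val '' S ⊆ C₁ ∪ {u, v, w} := by
    rintro S _ ⟨a, -, rfl⟩; exact a.2
  have hsub2 : ∀ (S : Set ↥(C₂ ∪ {u, v, w})), Subtype.val '' S ⊆ C₂ ∪ {u, v, w} := by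
    rintro S _ ⟨a, -, rfl⟩; exact a.2
  have hmap1 : ∀ S ∈ A, Subtype.val '' S ∈ D := by
    intro S hS
    obtain ⟨h₁, h₂⟩ := transfer hT3 h1 hS
    exact ⟨h₁, h₂⟩
  have hmap2 : ∀ S ∈ B, Subtype.val '' S ∈ D := by
    intro S hS
    obtain ⟨h₁, h₂⟩ := transfer hT3 h2 hS
    exact ⟨h₁, h₂⟩
  have e1 : A.ncard = ((fun S => Subtype.val '' S) '' A).ncard :=
    (Set.ncard_image_of_injective _ (Set.image_injective.mpr Subtype.val_injective)).symm
  have e2 : B.ncard = ((fun S => Subtype.val '' S) '' B).ncard :=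
    (Set.ncard_image_of_injective _ (Set.image_injective.mpr Subtype.val_injective)).symm
  have hdisj : Disjoint ((fun S => Subtype.val '' S) '' A) ((fun S => Subtype.val '' S) '' B) := by
    rw [Set.disjoint_left]
    rintro s ⟨S1, hS1, rfl⟩ ⟨S2, hS2, heq⟩
    have hsubT : Subtype.val '' S1 ⊆ ({u, v, w} : Set V) := by
      intro a haa
      rcases hsub1 S1 haa with h | h
      · have heq' : Subtype.val '' S2 = Subtype.val '' S1 := heq
        rcases hsub2 S2 (heq' ▸ haa) with h' | h'
        · exact absurd h' (Set.disjoint_left.mp hdisjC h)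
        · exact h'
      · exact h
    have hS1card : (Subtype.val '' S1).ncard = 3 :=
      (Set.ncard_image_of_injective S1 Subtype.val_injective).trans hS1.1
    have : Subtype.val '' S1 = ({u, v, w} : Set V) :=
      Set.eq_of_subset_of_ncard_le hsubT (by rw [hS1card, hT3]) (Set.toFinite _)
    exact (transfer hT3 h1 hS1).2 this
  have hcup : ((fun S => Subtype.val '' S) '' A) ∪ ((fun S => Subtype.val '' S) '' B) ⊆ D := by
    rintro s (⟨S1, hS1, rfl⟩ | ⟨S2, hS2, rfl⟩)
    · exact hmap1 S1 hS1
    · exact hmap2 S2 hS2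
  calc A.ncard + B.ncard
      = ((fun S => Subtype.val '' S) '' A).ncard + ((fun S => Subtype.val '' S) '' B).ncard := by
        rw [e1, e2]
    _ = (((fun S => Subtype.val '' S) '' A) ∪ ((fun S => Subtype.val '' S) '' B)).ncard :=
        (Set.ncard_union_eq hdisj (Set.toFinite _) (Set.toFinite _)).symm
    _ ≤ D.ncard := Set.ncard_le_ncard hcup (Set.toFinite _)
    _ = k - 1 := hDcard
end

section
/- Every 3-connected planar graph G with at least one 3-cut has a 3-cut {u,v,w} such that at least one edge closed component of G - {u,v,w} contains no 3-cut, i.e., is 4-connected or isomorphic to K4. -/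
open SimpleGraph Set

variable {V : Type*}

section Helpers

variable {G : SimpleGraph V}

private lemma reach_up {s t : Set V} (hst : s ⊆ t) {a b : ↥s}
    (h : (G.induce s).Reachable a b) :
    (G.induce t).Reachable ⟨a, hst a.2⟩ ⟨b, hst b.2⟩ :=
  Reachable.map (G := G.induce s) (G' := G.induce t)
    ⟨fun x => ⟨x, hst x.2⟩, fun h => h⟩ h

private lemma closed_walk {s K : Set V} (hK : ∀ a ∈ K, ∀ b ∈ s, G.Adj a b → b ∈ K)
    {a b : ↥s} (w : (G.induce s).Walk a b) (ha : ↑a ∈ K) : (↑b : V) ∈ K := by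
  induction w with
  | nil => exact ha
  | cons h p ih => exact ih (hK _ ha _ (Subtype.mem _) h)

private lemma exists_comp {S : Set V} {a : V} (ha : a ∈ Sᶜ) :
    ∃ C : Set V, IsCompOf G S C ∧ a ∈ C := by
  classical
  refine ⟨{b | ∃ hb : b ∈ Sᶜ, (G.induce Sᶜ).Reachable ⟨a, ha⟩ ⟨b, hb⟩},
    ⟨⟨a, ha, Reachable.refl _⟩, fun b hb => hb.1, ?_, ?_⟩, ⟨ha, Reachable.refl _⟩⟩
  · set C : Set V := {b | ∃ hb : b ∈ Sᶜ, (G.induce Sᶜ).Reachable ⟨a, ha⟩ ⟨b, hb⟩} with hCdef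
    have aux : ∀ (y z : ↥Sᶜ) (w : (G.induce Sᶜ).Walk y z),
        (G.induce Sᶜ).Reachable ⟨a, ha⟩ y → ∀ (hy : (↑y : V) ∈ C) (hz : (↑z : V) ∈ C),
        (G.induce C).Reachable ⟨↑y, hy⟩ ⟨↑z, hz⟩ := by
      intro y z w
      induction w with
      | nil => intro _ h1 h2; exact Reachable.refl _
      | @cons y m z h p ih =>
        intro hy hyC hzC
        have hm : (G.induce Sᶜ).Reachable ⟨a, ha⟩ m := hy.trans h.reachable
        have hmC : (↑m : V) ∈ C := ⟨m.2, by simpa using hm⟩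
        have hadj : (G.induce C).Adj ⟨↑y, hyC⟩ ⟨↑m, hmC⟩ := h
        exact hadj.reachable.trans (ih hm hmC hzC)
    haveI : Nonempty ↥C := ⟨⟨a, ⟨ha, Reachable.refl _⟩⟩⟩
    refine ⟨?_⟩
    rintro ⟨b, hbS, hbr⟩ ⟨c, hcS, hcr⟩
    obtain ⟨w⟩ := hbr.symm.trans hcr
    exact aux _ _ w hbr ⟨hbS, hbr⟩ ⟨hcS, hcr⟩
  · rintro b ⟨hbS, hbr⟩ c hc hadj
    exact ⟨hc, hbr.trans (SimpleGraph.Adj.reachable (by simpa using hadj))⟩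

private lemma pair_card_le (a b : V) : ({a, b} : Set V).ncard ≤ 2 :=
  le_trans (Set.ncard_insert_le _ _) (by simp)

private lemma triple_distinct {u v w : V} (h : ({u, v, w} : Set V).ncard = 3) :
    u ≠ v ∧ u ≠ w ∧ v ≠ w := by
  refine ⟨?_, ?_, ?_⟩ <;> rintro rfl
  · rw [show ({u, u, w} : Set V) = {u, w} by simp] at h
    have := pair_card_le u w; omega
  · rw [show ({u, v, u} : Set V) = {u, v} by
      simp [Set.insert_comm, Set.pair_comm]] at h
    have := pair_card_le u v; omega
  · rw [show ({u, v, v} : Set V) = {u, v} by simp] at h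
    have := pair_card_le u v; omega

end Helpers

/-- Every 3-connected planar graph with a 3-cut has a 3-cut `{u,v,w}` one of whose edge
closed components has no 3-cut (i.e. is 4-connected or isomorphic to `K₄`). -/
theorem stmt8 [Fintype V] (G : SimpleGraph V)
    (hP : IsPlanar G) (h3 : IsKConnected 3 G)
    (hex : ∃ S : Set V, IsThreeCut G S) :
    ∃ u v w : V, IsThreeCut G {u, v, w} ∧
      ∃ C : Set V, IsCompOf G {u, v, w} C ∧
        ∀ S : Set ↥(C ∪ {u, v, w}), ¬ IsThreeCut (edgeClosedGraph G u v w C) S := by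
  classical
  clear hP h3
  have hPex : ∃ C : Set V, ∃ u v w : V, IsThreeCut G {u, v, w} ∧ IsCompOf G {u, v, w} C := by
    obtain ⟨S, hS⟩ := hex
    obtain ⟨u, v, w, -, -, -, rfl⟩ := Set.ncard_eq_three.mp hS.1
    have hd := hS.2
    simp only [SimpleGraph.Preconnected, not_forall] at hd
    obtain ⟨p, q, -⟩ := hd
    obtain ⟨C, hC, -⟩ := exists_comp (G := G) p.2
    exact ⟨C, u, v, w, hS, hC⟩
  have hNne : {n | ∃ C : Set V, (∃ u v w : V, IsThreeCut G {u, v, w} ∧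
      IsCompOf G {u, v, w} C) ∧ C.ncard = n}.Nonempty := by
    obtain ⟨C, hC⟩ := hPex; exact ⟨C.ncard, C, hC, rfl⟩
  obtain ⟨C, hPC, hCcard⟩ := Nat.sInf_mem hNne
  have hmin : ∀ C' : Set V, (∃ u v w : V, IsThreeCut G {u, v, w} ∧ IsCompOf G {u, v, w} C') →
      sInf {n | ∃ C : Set V, (∃ u v w : V, IsThreeCut G {u, v, w} ∧
        IsCompOf G {u, v, w} C) ∧ C.ncard = n} ≤ C'.ncard :=
    fun C' h => Nat.sInf_le ⟨C', h, rfl⟩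
  obtain ⟨u, v, w, hcut, hC⟩ := hPC
  refine ⟨u, v, w, hcut, C, hC, ?_⟩
  intro S hS
  obtain ⟨hCne, hCsub, hCconn, hCcl⟩ := hC
  obtain ⟨huv, huw, hvw⟩ := triple_distinct hcut.1
  have humem : u ∈ C ∪ ({u, v, w} : Set V) := Or.inr (by simp)
  have hvmem : v ∈ C ∪ ({u, v, w} : Set V) := Or.inr (by simp)
  have hwmem : w ∈ C ∪ ({u, v, w} : Set V) := Or.inr (by simp)
  -- a vertex outside C ∪ {u,v,w}
  have hdisc := hcut.2
  simp only [SimpleGraph.Preconnected, not_forall] at hdisc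
  obtain ⟨p, q, hpq⟩ := hdisc
  have hdex : ∃ d : V, d ∉ C ∪ ({u, v, w} : Set V) := by
    by_cases hp : (↑p : V) ∈ C
    · by_cases hq : (↑q : V) ∈ C
      · exact absurd (reach_up hCsub (hCconn.preconnected ⟨↑p, hp⟩ ⟨↑q, hq⟩)) hpq
      · exact ⟨↑q, fun hmem => hmem.elim hq q.2⟩
    · exact ⟨↑p, fun hmem => hmem.elim hp p.2⟩
  obtain ⟨d, hd⟩ := hdex
  by_cases hT : ∃ z : ↥(C ∪ ({u, v, w} : Set V)), (↑z : V) ∈ ({u, v, w} : Set V) ∧ z ∉ S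
  case neg =>
    push_neg at hT
    apply hS.2
    have htri : ({⟨u, humem⟩, ⟨v, hvmem⟩, ⟨w, hwmem⟩} :
        Set ↥(C ∪ ({u, v, w} : Set V))) ⊆ S := by
      rintro z (rfl | rfl | rfl)
      · exact hT _ (by simp)
      · exact hT _ (by simp)
      · exact hT _ (by simp)
    have htricard : ({⟨u, humem⟩, ⟨v, hvmem⟩, ⟨w, hwmem⟩} :
        Set ↥(C ∪ ({u, v, w} : Set V))).ncard = 3 :=
      Set.ncard_eq_three.mpr ⟨_, _, _,
        fun h => huv (congrArg Subtype.val h),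
        fun h => huw (congrArg Subtype.val h),
        fun h => hvw (congrArg Subtype.val h), rfl⟩
    have hSeq : S = ({⟨u, humem⟩, ⟨v, hvmem⟩, ⟨w, hwmem⟩} :
        Set ↥(C ∪ ({u, v, w} : Set V))) := by
      refine (Set.eq_of_subset_of_ncard_le htri ?_ (Set.toFinite S)).symm
      rw [hS.1, htricard]
    have hmemC : ∀ z : ↥Sᶜ, (↑↑z : V) ∈ C := by
      intro z
      rcases (↑z : ↥(C ∪ ({u, v, w} : Set V))).2 with h | h
      · exact h
      · exact absurd (hT _ h) z.2
    have hnotS : ∀ c (hc : c ∈ C),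
        (⟨c, Or.inl hc⟩ : ↥(C ∪ ({u, v, w} : Set V))) ∉ S := by
      intro c hc hmem
      rw [hSeq] at hmem
      rcases hmem with h | h | h
      · exact hCsub hc (Or.inl (congrArg Subtype.val h))
      · exact hCsub hc (Or.inr (Or.inl (congrArg Subtype.val h)))
      · exact hCsub hc (Or.inr (Or.inr (congrArg Subtype.val h)))
    intro z1 z2
    have hr := hCconn.preconnected ⟨_, hmemC z1⟩ ⟨_, hmemC z2⟩
    exact Reachable.map (G := G.induce C)
      (G' := (edgeClosedGraph G u v w C).induce Sᶜ)
      ⟨fun x => ⟨⟨↑x, Or.inl x.2⟩, hnotS _ x.2⟩, by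
        intro a b hadj
        have hG : G.Adj ↑a ↑b := hadj
        show (edgeClosedGraph G u v w C).Adj ⟨↑a, Or.inl a.2⟩ ⟨↑b, Or.inl b.2⟩
        simp only [edgeClosedGraph, SimpleGraph.fromRel_adj]
        exact ⟨fun h => hG.ne
          (congrArg (fun z : ↥(C ∪ ({u, v, w} : Set V)) => (z : V)) h),
          Or.inl (Or.inl hG)⟩⟩ hr
  case pos =>
    obtain ⟨t0, ht0uvw, ht0S⟩ := hT
    have hTreach : ∀ (z : ↥(C ∪ ({u, v, w} : Set V))) (hz1 : (↑z : V) ∈ ({u, v, w} : Set V))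
        (hz2 : z ∉ S), ((edgeClosedGraph G u v w C).induce Sᶜ).Reachable ⟨z, hz2⟩ ⟨t0, ht0S⟩ := by
      intro z hz1 hz2
      by_cases hzt : z = t0
      · subst hzt; exact Reachable.refl _
      · refine SimpleGraph.Adj.reachable ?_
        show (edgeClosedGraph G u v w C).Adj z t0
        simp only [edgeClosedGraph, SimpleGraph.fromRel_adj]
        exact ⟨hzt, Or.inl (Or.inr ⟨hz1, ht0uvw⟩)⟩
    have hdisc2 := hS.2
    simp only [SimpleGraph.Preconnected, not_forall] at hdisc2
    obtain ⟨p2, q2, hpq2⟩ := hdisc2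
    have hxex : ∃ x : ↥Sᶜ, ¬ ((edgeClosedGraph G u v w C).induce Sᶜ).Reachable x ⟨t0, ht0S⟩ := by
      by_cases h1 : ((edgeClosedGraph G u v w C).induce Sᶜ).Reachable p2 ⟨t0, ht0S⟩
      · exact ⟨q2, fun h2 => hpq2 (h1.trans h2.symm)⟩
      · exact ⟨p2, h1⟩
    obtain ⟨x, hx⟩ := hxex
    have hreachC : ∀ z : ↥Sᶜ, ((edgeClosedGraph G u v w C).induce Sᶜ).Reachable x z →
        (↑↑z : V) ∈ C := by
      intro z hz
      rcases (↑z : ↥(C ∪ ({u, v, w} : Set V))).2 with h | h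
      · exact h
      · exact absurd (hz.trans (hTreach ↑z h z.2)) hx
    set K0 : Set V := (fun z : ↥Sᶜ => (↑↑z : V)) ''
      {z | ((edgeClosedGraph G u v w C).induce Sᶜ).Reachable x z} with hK0def
    have hK0C : K0 ⊆ C := by rintro c ⟨z, hz, rfl⟩; exact hreachC z hz
    have hxK0 : (↑↑x : V) ∈ K0 := ⟨x, Reachable.refl _, rfl⟩
    have hS'sub : (Subtype.val '' S : Set V) ⊆ C ∪ ({u, v, w} : Set V) := by
      rintro c ⟨s, hs, rfl⟩; exact s.2
    have hS'card : (Subtype.val '' S : Set V).ncard = 3 := by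
      rw [Set.ncard_image_of_injective _ Subtype.val_injective, hS.1]
    have hK0S' : K0 ⊆ (Subtype.val '' S : Set V)ᶜ := by
      rintro c ⟨z, hz, rfl⟩ hc
      obtain ⟨s, hsS, hsv⟩ := hc
      exact z.2 (by rwa [show s = ↑z from Subtype.ext hsv] at hsS)
    have hclosed : ∀ a ∈ K0, ∀ b ∈ (Subtype.val '' S : Set V)ᶜ, G.Adj a b → b ∈ K0 := by
      rintro a ⟨z, hz, rfl⟩ b hb hadj
      by_cases hbW : b ∈ C ∪ ({u, v, w} : Set V)
      · have hbS : (⟨b, hbW⟩ : ↥(C ∪ ({u, v, w} : Set V))) ∉ S :=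
          fun hmem => hb ⟨_, hmem, rfl⟩
        have hzadj : ((edgeClosedGraph G u v w C).induce Sᶜ).Adj z ⟨⟨b, hbW⟩, hbS⟩ := by
          show (edgeClosedGraph G u v w C).Adj ↑z ⟨b, hbW⟩
          simp only [edgeClosedGraph, SimpleGraph.fromRel_adj]
          exact ⟨fun h => hadj.ne (congrArg Subtype.val h), Or.inl (Or.inl hadj)⟩
        exact ⟨_, hz.trans hzadj.reachable, rfl⟩
      · exfalso
        exact hbW (Or.inl (hCcl _ (hreachC z hz) b
          (fun hbuvw => hbW (Or.inr hbuvw)) hadj))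
    have hcut' : IsThreeCut G (Subtype.val '' S : Set V) := by
      refine ⟨hS'card, ?_⟩
      intro hpre
      have hxS' : (↑↑x : V) ∈ (Subtype.val '' S : Set V)ᶜ := hK0S' hxK0
      have hdS' : d ∈ (Subtype.val '' S : Set V)ᶜ := fun hdm => hd (hS'sub hdm)
      obtain ⟨wk⟩ := hpre ⟨_, hxS'⟩ ⟨d, hdS'⟩
      exact hd (Or.inl (hK0C (closed_walk hclosed wk hxK0)))
    have aux : ∀ (y z : ↥Sᶜ) (wk : ((edgeClosedGraph G u v w C).induce Sᶜ).Walk y z),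
        ((edgeClosedGraph G u v w C).induce Sᶜ).Reachable x y →
        ∀ (hy : (↑↑y : V) ∈ K0) (hz : (↑↑z : V) ∈ K0),
        (G.induce K0).Reachable ⟨_, hy⟩ ⟨_, hz⟩ := by
      intro y z wk
      induction wk with
      | nil => intro _ h1 h2; exact Reachable.refl _
      | @cons y m z h p ih =>
        intro hy hyK hzK
        have hm : ((edgeClosedGraph G u v w C).induce Sᶜ).Reachable x m := hy.trans h.reachable
        have hmK : (↑↑m : V) ∈ K0 := ⟨m, hm, rfl⟩
        have hGadj : G.Adj ↑↑y ↑↑m := by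
          have hH2 : (edgeClosedGraph G u v w C).Adj ↑y ↑m := h
          simp only [edgeClosedGraph, SimpleGraph.fromRel_adj] at hH2
          obtain ⟨hne, hrel⟩ := hH2
          rcases hrel with (hg | ⟨h1, h2⟩) | (hg | ⟨h1, h2⟩)
          · exact hg
          · exact absurd h1 (hCsub (hK0C hyK))
          · exact hg.symm
          · exact absurd h2 (hCsub (hK0C hyK))
        have hadj2 : (G.induce K0).Adj ⟨_, hyK⟩ ⟨_, hmK⟩ := hGadj
        exact hadj2.reachable.trans (ih hm hmK hzK)
    have hcomp' : IsCompOf G (Subtype.val '' S : Set V) K0 := by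
      refine ⟨⟨_, hxK0⟩, hK0S', ?_, hclosed⟩
      haveI : Nonempty ↥K0 := ⟨⟨_, hxK0⟩⟩
      refine ⟨?_⟩
      intro z1 z2
      obtain ⟨za, hza, h1⟩ := z1.2
      obtain ⟨zb, hzb, h2⟩ := z2.2
      obtain ⟨wk⟩ := hza.symm.trans hzb
      have h := aux _ _ wk hza ⟨za, hza, rfl⟩ ⟨zb, hzb, rfl⟩
      have e1 : z1 = ⟨_, ⟨za, hza, rfl⟩⟩ := Subtype.ext h1.symm
      have e2 : z2 = ⟨_, ⟨zb, hzb, rfl⟩⟩ := Subtype.ext h2.symm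
      rw [e1, e2]; exact h
    have hK0ne : K0 ≠ C := by
      by_cases hSC : ∃ s ∈ S, (↑s : V) ∈ C
      · obtain ⟨s, hsS, hsC⟩ := hSC
        intro heq
        have hsK : (↑s : V) ∈ K0 := by rw [heq]; exact hsC
        exact hK0S' hsK ⟨s, hsS, rfl⟩
      · push_neg at hSC
        exfalso
        have htri : S ⊆ ({⟨u, humem⟩, ⟨v, hvmem⟩, ⟨w, hwmem⟩} :
            Set ↥(C ∪ ({u, v, w} : Set V))) := by
          intro s hsS
          rcases s.2 with h | h
          · exact absurd h (hSC s hsS)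
          · rcases h with h | h | h
            · exact Or.inl (Subtype.ext h)
            · exact Or.inr (Or.inl (Subtype.ext h))
            · exact Or.inr (Or.inr (Subtype.ext h))
        have htricard : ({⟨u, humem⟩, ⟨v, hvmem⟩, ⟨w, hwmem⟩} :
            Set ↥(C ∪ ({u, v, w} : Set V))).ncard = 3 :=
          Set.ncard_eq_three.mpr ⟨_, _, _,
            fun h => huv (congrArg Subtype.val h),
            fun h => huw (congrArg Subtype.val h),
            fun h => hvw (congrArg Subtype.val h), rfl⟩
        have hSeq : S = ({⟨u, humem⟩, ⟨v, hvmem⟩, ⟨w, hwmem⟩} :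
            Set ↥(C ∪ ({u, v, w} : Set V))) := by
          refine Set.eq_of_subset_of_ncard_le htri ?_ (Set.toFinite _)
          rw [hS.1, htricard]
        apply ht0S
        rw [hSeq]
        rcases ht0uvw with h | h | h
        · exact Or.inl (Subtype.ext h)
        · exact Or.inr (Or.inl (Subtype.ext h))
        · exact Or.inr (Or.inr (Subtype.ext h))
    have hlt : K0.ncard < C.ncard :=
      Set.ncard_lt_ncard (Set.ssubset_iff_subset_ne.mpr ⟨hK0C, hK0ne⟩) (Set.toFinite C)
    have hle : C.ncard ≤ K0.ncard := by
      rw [hCcard]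
      refine hmin K0 ?_
      obtain ⟨u', v', w', -, -, -, hSeq'⟩ := Set.ncard_eq_three.mp hS'card
      exact ⟨u', v', w', hSeq' ▸ hcut', hSeq' ▸ hcomp'⟩
    exact absurd hlt (not_lt.mpr hle)
end
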